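/- arXiv:1010.1275 — 3 statements merged into one kernel-verified Lean document; each statement's English description precedes it below -/
import Mathlib

section
/- For each a ∈ ℂ with |a| < 1, the map Φ_a(z₁,z₂,z₃) = ((z₁-a)/(1-conj(a)z₁), (1-|a|²)^{1/4} z₂/(1-conj(a)z₁)^{1/2}, (1-|a|²)^{1/4} z₃/(1-conj(a)z₁)^{1/2}) maps the domain Ω* = {(z₁,z₂,z₃) ∈ ℂ³ : |z₁|² + (|z₂|² + |z₃|²)² < 1} into itself. -/
open Complex

/-- The Catlin-type example domain `Ω* = {|z₁|² + (|z₂|² + |z₃|²)² < 1} ⊆ ℂ³`. -/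
def OmegaStar : Set (ℂ × ℂ × ℂ) :=
  {z : ℂ × ℂ × ℂ | ‖z.1‖^2 + (‖z.2.1‖^2 + ‖z.2.2‖^2)^2 < 1}

/-- The automorphism `Φ_a` of `Ω*`, using the principal branch of the square root
(valid since `Re(1 - conj(a) z₁) > 0` for `|z₁| < 1`). -/
noncomputable def PhiStar (a : ℂ) (z : ℂ × ℂ × ℂ) : ℂ × ℂ × ℂ :=
  ((z.1 - a) / (1 - (starRingEnd ℂ) a * z.1),
   (((1 - ‖a‖^2) ^ ((1:ℝ)/4) : ℝ) : ℂ) * z.2.1 / (1 - (starRingEnd ℂ) a * z.1) ^ ((1:ℂ)/2),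
   (((1 - ‖a‖^2) ^ ((1:ℝ)/4) : ℝ) : ℂ) * z.2.2 / (1 - (starRingEnd ℂ) a * z.1) ^ ((1:ℂ)/2))

/-- For `‖a‖ < 1`, the map `Φ_a` sends `Ω*` into itself. -/
theorem PhiStar_mapsTo (a : ℂ) (ha : ‖a‖ < 1) :
    Set.MapsTo (PhiStar a) OmegaStar OmegaStar := by
  rintro ⟨z1, z2, z3⟩ hz
  simp only [OmegaStar, Set.mem_setOf_eq] at hz ⊢
  simp only [PhiStar]
  have hP : (0:ℝ) < 1 - ‖a‖^2 := by nlinarith [norm_nonneg a]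
  have hz1 : ‖z1‖ < 1 := by
    nlinarith [norm_nonneg z1, sq_nonneg (‖z2‖^2 + ‖z3‖^2)]
  set w : ℂ := 1 - (starRingEnd ℂ) a * z1 with hw
  have hx : ‖(starRingEnd ℂ) a * z1‖ < 1 := by
    rw [norm_mul]
    have : ‖(starRingEnd ℂ) a‖ = ‖a‖ := by simp
    rw [this]
    nlinarith [norm_nonneg a, norm_nonneg z1]
  have hwpos : 0 < ‖w‖ := by
    have h := norm_sub_norm_le (1:ℂ) ((starRingEnd ℂ) a * z1)
    rw [norm_one] at h
    linarith
  have hwne : w ≠ 0 := norm_pos_iff.mp hwpos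
  -- norm of the square root
  have hhalf : ‖w ^ ((1:ℂ)/2)‖ = ‖w‖ ^ ((1:ℝ)/2) := by
    rw [Complex.norm_cpow_of_ne_zero hwne]
    simp
  set q : ℝ := (1 - ‖a‖^2) ^ ((1:ℝ)/4) with hq
  set u : ℝ := ‖w‖ ^ ((1:ℝ)/2) with hu
  have hq0 : 0 < q := Real.rpow_pos_of_pos hP _
  have hu0 : 0 < u := Real.rpow_pos_of_pos hwpos _
  have hq4 : q^4 = 1 - ‖a‖^2 := by
    rw [hq, ← Real.rpow_natCast ((1 - ‖a‖^2) ^ ((1:ℝ)/4)) 4, ← Real.rpow_mul hP.le]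
    norm_num
  have hu2 : u^2 = ‖w‖ := by
    rw [hu, ← Real.rpow_natCast (‖w‖ ^ ((1:ℝ)/2)) 2, ← Real.rpow_mul hwpos.le]
    norm_num
  -- norms of the three components
  have h1 : ‖(z1 - a) / w‖ = ‖z1 - a‖ / ‖w‖ := norm_div _ _
  have h2 : ‖((q:ℝ):ℂ) * z2 / w ^ ((1:ℂ)/2)‖ = q * ‖z2‖ / u := by
    rw [norm_div, norm_mul, hhalf, Complex.norm_real, Real.norm_of_nonneg hq0.le]
  have h3 : ‖((q:ℝ):ℂ) * z3 / w ^ ((1:ℂ)/2)‖ = q * ‖z3‖ / u := by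
    rw [norm_div, norm_mul, hhalf, Complex.norm_real, Real.norm_of_nonneg hq0.le]
  rw [h1, h2, h3]
  -- key identity
  have key : ‖z1 - a‖^2 + (1 - ‖a‖^2)*(1 - ‖z1‖^2) = ‖w‖^2 := by
    rw [hw]
    simp only [Complex.sq_norm, Complex.normSq_apply, Complex.sub_re,
      Complex.sub_im, Complex.mul_re, Complex.mul_im, Complex.one_re, Complex.one_im,
      Complex.conj_re, Complex.conj_im]
    ring
  have hs : (q * ‖z2‖ / u)^2 + (q * ‖z3‖ / u)^2 = q^2 * (‖z2‖^2 + ‖z3‖^2) / ‖w‖ := by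
    rw [← hu2]
    field_simp
  rw [hs]
  have hfin : (q^2 * (‖z2‖^2 + ‖z3‖^2) / ‖w‖)^2
      = (1 - ‖a‖^2) * (‖z2‖^2 + ‖z3‖^2)^2 / ‖w‖^2 := by
    rw [div_pow, ← hq4]
    ring
  rw [hfin, div_pow]
  rw [← add_div, div_lt_one (by positivity)]
  nlinarith [hz, hP, sq_nonneg (‖z2‖^2 + ‖z3‖^2)]
end

section
/- The identity 1 - |w₁|² - (|w₂|² + |w₃|²)² = (1-|a|²)·(1 - |z₁|² - (|z₂|²+|z₃|²)²)/|1 - conj(a)z₁|² holds, where (w₁,w₂,w₃) = Φ_a(z₁,z₂,z₃) is the map from the Catlin-type example domain Ω*, for all z with |z₁| < 1. -/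
open Complex

/-- The identity
`1 - |w₁|² - (|w₂|² + |w₃|²)² = (1-|a|²)(1 - |z₁|² - (|z₂|²+|z₃|²)²) / |1 - conj(a)z₁|²`
for `w = Φ_a(z)`, valid when `‖a‖ < 1` and `‖z₁‖ < 1`. -/
theorem PhiStar_defining_identity (a : ℂ) (ha : ‖a‖ < 1) (z : ℂ × ℂ × ℂ)
    (hz : ‖z.1‖ < 1) :
    1 - ‖(PhiStar a z).1‖^2 - (‖(PhiStar a z).2.1‖^2 + ‖(PhiStar a z).2.2‖^2)^2 =
      (1 - ‖a‖^2) * (1 - ‖z.1‖^2 - (‖z.2.1‖^2 + ‖z.2.2‖^2)^2) /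
        ‖1 - (starRingEnd ℂ) a * z.1‖^2 := by
  have hA : (0:ℝ) ≤ 1 - ‖a‖^2 := by nlinarith [norm_nonneg a]
  set d : ℂ := 1 - (starRingEnd ℂ) a * z.1 with hd
  have hdn : d ≠ 0 := by
    intro h
    have h2 : (1:ℂ) = (starRingEnd ℂ) a * z.1 := by
      have := sub_eq_zero.mp h; exact this
    have h1 : ‖(starRingEnd ℂ) a * z.1‖ < 1 := by
      rw [norm_mul, RCLike.norm_conj]
      nlinarith [norm_nonneg a, norm_nonneg z.1]
    rw [← h2] at h1; simp at h1
  have hdpos : 0 < ‖d‖ := norm_pos_iff.mpr hdn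
  -- norm of the square root
  have hsqrt : ‖d ^ ((1:ℂ)/2)‖ = ‖d‖ ^ ((1:ℝ)/2) := by
    rw [show ((1:ℂ)/2) = (((1:ℝ)/2 : ℝ) : ℂ) by norm_num]
    exact Complex.norm_cpow_real d _
  have hsqrt2 : ‖d ^ ((1:ℂ)/2)‖ ^ 2 = ‖d‖ := by
    rw [hsqrt, ← Real.rpow_natCast (‖d‖ ^ ((1:ℝ)/2)) 2, ← Real.rpow_mul hdpos.le]
    norm_num
  -- fourth root
  have hc : (((1 - ‖a‖^2) ^ ((1:ℝ)/4) : ℝ))^2 = (1 - ‖a‖^2) ^ ((1:ℝ)/2) := by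
    rw [← Real.rpow_natCast ((1 - ‖a‖^2) ^ ((1:ℝ)/4)) 2, ← Real.rpow_mul hA]
    norm_num
  have hc2 : ((1 - ‖a‖^2) ^ ((1:ℝ)/2))^2 = 1 - ‖a‖^2 := by
    rw [← Real.rpow_natCast ((1 - ‖a‖^2) ^ ((1:ℝ)/2)) 2, ← Real.rpow_mul hA]
    norm_num
  -- Möbius key identity
  have key : ‖d‖^2 - ‖z.1 - a‖^2 = (1 - ‖a‖^2) * (1 - ‖z.1‖^2) := by
    have h1 : ∀ x : ℂ, ‖x‖^2 = Complex.normSq x := fun x => by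
      exact (Complex.normSq_eq_norm_sq x).symm
    rw [h1, h1, hd]
    rw [show ‖a‖^2 = Complex.normSq a from h1 a, show ‖z.1‖^2 = Complex.normSq z.1 from h1 z.1]
    simp only [Complex.normSq_apply, Complex.sub_re, Complex.sub_im, Complex.mul_re,
      Complex.mul_im, Complex.one_re, Complex.one_im, Complex.conj_re, Complex.conj_im]
    ring
  -- compute norms of components
  have hw1 : ‖(PhiStar a z).1‖^2 = ‖z.1 - a‖^2 / ‖d‖^2 := by
    simp only [PhiStar, ← hd, norm_div]
    rw [div_pow]
  have hw2 : ‖(PhiStar a z).2.1‖^2 =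
      (1 - ‖a‖^2) ^ ((1:ℝ)/2) * ‖z.2.1‖^2 / ‖d‖ := by
    simp only [PhiStar, ← hd, norm_div, norm_mul, Complex.norm_real]
    rw [div_pow, mul_pow, hsqrt2, Real.norm_eq_abs,
      _root_.abs_of_nonneg (Real.rpow_nonneg hA _), hc]
  have hw3 : ‖(PhiStar a z).2.2‖^2 =
      (1 - ‖a‖^2) ^ ((1:ℝ)/2) * ‖z.2.2‖^2 / ‖d‖ := by
    simp only [PhiStar, ← hd, norm_div, norm_mul, Complex.norm_real]
    rw [div_pow, mul_pow, hsqrt2, Real.norm_eq_abs,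
      _root_.abs_of_nonneg (Real.rpow_nonneg hA _), hc]
  rw [hw1, hw2, hw3]
  have hd2 : (0:ℝ) < ‖d‖^2 := by positivity
  have hne : ‖d‖ ≠ 0 := hdpos.ne'
  have hS : ((1 - ‖a‖^2) ^ ((1:ℝ)/2) * ‖z.2.1‖^2 / ‖d‖ +
      (1 - ‖a‖^2) ^ ((1:ℝ)/2) * ‖z.2.2‖^2 / ‖d‖)^2
      = (1 - ‖a‖^2) * (‖z.2.1‖^2 + ‖z.2.2‖^2)^2 / ‖d‖^2 := by
    rw [← add_div, ← mul_add, div_pow, mul_pow, hc2]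
  rw [hS]
  have hmain : ‖d‖^2 - ‖z.1 - a‖^2 - (1 - ‖a‖^2)*(‖z.2.1‖^2 + ‖z.2.2‖^2)^2
      = (1 - ‖a‖^2)*(1 - ‖z.1‖^2 - (‖z.2.1‖^2 + ‖z.2.2‖^2)^2) := by
    linear_combination key
  rw [← hmain, sub_div, sub_div, div_self hd2.ne']
end

section
/- Let Ω ⊂ ℂⁿ be a bounded domain, X ∈ Ω, and φ_j ∈ Aut(Ω) with φ_j(X) → P ∈ ∂Ω. Suppose there is a holomorphic peak function at P. Then φ_j(z) → P for every z ∈ Ω, and the convergence is uniform on compact subsets of Ω. -/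
open Filter Metric Set Topology

/-- `f` is an automorphism of the domain `Ω ⊆ ℂⁿ`: a biholomorphic self-map. -/
def IsAut {n : ℕ} (Ω : Set (Fin n → ℂ)) (f : (Fin n → ℂ) → (Fin n → ℂ)) : Prop :=
  DifferentiableOn ℂ f Ω ∧ Set.BijOn f Ω Ω ∧
    ∃ g, DifferentiableOn ℂ g Ω ∧ Set.MapsTo g Ω Ω ∧
      (∀ z ∈ Ω, g (f z) = z) ∧ (∀ z ∈ Ω, f (g z) = z)

private lemma normSq_identity (a z : ℂ) :
    Complex.normSq (1 - (starRingEnd ℂ) a * z) - Complex.normSq (z - a)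
      = (1 - Complex.normSq a) * (1 - Complex.normSq z) := by
  simp only [Complex.normSq_apply, Complex.sub_re, Complex.sub_im, Complex.mul_re,
    Complex.mul_im, Complex.one_re, Complex.one_im, Complex.conj_re, Complex.conj_im]
  ring

/-- Schwarz–Pick type estimate near the boundary point `1`, strict version. -/
private lemma lemA_strict {R : ℝ} {h : ℂ → ℂ}
    (hd : DifferentiableOn ℂ h (ball 0 R)) (hb : ∀ w ∈ ball (0:ℂ) R, ‖h w‖ < 1)
    {w : ℂ} (hw : w ∈ ball (0:ℂ) R) :
    (1 - ‖w‖ / R) * ‖1 - h w‖ ≤ (1 + ‖w‖ / R) * ‖1 - h 0‖ := by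
  have hR : 0 < R := nonempty_ball.mp ⟨_, hw⟩
  have h0 : (0:ℂ) ∈ ball (0:ℂ) R := by simpa using hR
  set a : ℂ := h 0 with ha
  have hanorm : ‖a‖ < 1 := hb 0 h0
  have hden : ∀ u ∈ ball (0:ℂ) R, (1 - (starRingEnd ℂ) a * h u) ≠ 0 := by
    intro u hu hcon
    have : ‖(starRingEnd ℂ) a * h u‖ < 1 := by
      rw [norm_mul, RCLike.norm_conj]
      calc ‖a‖ * ‖h u‖ ≤ 1 * ‖h u‖ := by nlinarith [norm_nonneg (h u)]
        _ < 1 := by simpa using hb u hu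
    have h1 : (starRingEnd ℂ) a * h u = 1 := (sub_eq_zero.mp hcon).symm
    rw [h1] at this; simp at this
  set s : ℂ → ℂ := fun u => (h u - a) / (1 - (starRingEnd ℂ) a * h u) with hs
  have hs0 : s 0 = 0 := by simp [hs, ← ha]
  have hsd : DifferentiableOn ℂ s (ball 0 R) := by
    apply DifferentiableOn.div (hd.sub (differentiableOn_const a))
      ((differentiableOn_const 1).sub ((differentiableOn_const _).mul hd)) hden
  have hsmaps : MapsTo s (ball (0:ℂ) R) (ball (s 0) 1) := by
    intro u hu
    rw [hs0, mem_ball, dist_zero_right]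
    have key := normSq_identity a (h u)
    have hnsq : ∀ z : ℂ, ‖z‖^2 = Complex.normSq z := fun z => by
      rw [Complex.sq_norm]
    have h1 : Complex.normSq (h u) < 1 := by
      rw [← hnsq]; nlinarith [hb u hu, norm_nonneg (h u)]
    have h2 : Complex.normSq a < 1 := by
      rw [← hnsq]; nlinarith [norm_nonneg a]
    have hlt : Complex.normSq (h u - a) < Complex.normSq (1 - (starRingEnd ℂ) a * h u) := by
      nlinarith [Complex.normSq_nonneg (h u - a)]
    have : ‖h u - a‖ < ‖1 - (starRingEnd ℂ) a * h u‖ := by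
      rw [← hnsq, ← hnsq] at hlt
      nlinarith [norm_nonneg (h u - a), norm_nonneg (1 - (starRingEnd ℂ) a * h u)]
    calc ‖s u‖ = ‖h u - a‖ / ‖1 - (starRingEnd ℂ) a * h u‖ := by rw [hs]; simp [norm_div]
      _ < 1 := by
        rw [div_lt_one (lt_of_le_of_lt (norm_nonneg _) this)]; exact this
  have schwarz := Complex.dist_le_div_mul_dist_of_mapsTo_ball hsd (hsmaps.mono_right ball_subset_closedBall) hw
  rw [hs0, dist_zero_right, dist_zero_right, one_div, inv_mul_eq_div] at schwarz
  -- schwarz : ‖s w‖ ≤ ‖w‖ / R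
  have hnum : ‖h w - a‖ ≤ ‖w‖ / R * ‖1 - (starRingEnd ℂ) a * h w‖ := by
    have := hden w hw
    have heq : h w - a = s w * (1 - (starRingEnd ℂ) a * h w) := by
      rw [hs]; exact (div_mul_cancel₀ _ this).symm
    rw [heq, norm_mul]
    exact mul_le_mul_of_nonneg_right schwarz (norm_nonneg _)
  have htri : ‖1 - (starRingEnd ℂ) a * h w‖ ≤ ‖1 - h w‖ + ‖1 - a‖ := by
    have heq : 1 - (starRingEnd ℂ) a * h w = (1 - h w) + h w * (1 - (starRingEnd ℂ) a) := by ring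
    rw [heq]
    refine (norm_add_le _ _).trans ?_
    gcongr
    rw [norm_mul]
    have h1a : ‖1 - (starRingEnd ℂ) a‖ = ‖1 - a‖ := by
      rw [show (1:ℂ) - (starRingEnd ℂ) a = (starRingEnd ℂ) (1 - a) by simp, RCLike.norm_conj]
    rw [h1a]
    nlinarith [(hb w hw).le, norm_nonneg (1 - a), norm_nonneg (h w)]
  have hfin : ‖1 - h w‖ ≤ ‖1 - a‖ + ‖h w - a‖ := by
    have heq : (1:ℂ) - h w = (1 - a) + (a - h w) := by ring
    rw [heq]
    refine (norm_add_le _ _).trans ?_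
    rw [norm_sub_rev a (h w)]
  have hk1 : ‖w‖ / R < 1 := by
    rw [div_lt_one hR]; simpa [dist_zero_right] using hw
  have hk0 : 0 ≤ ‖w‖ / R := by positivity
  nlinarith [norm_nonneg (1 - h w), norm_nonneg (1 - a)]

/-- Schwarz–Pick type estimate near the boundary point `1`, weak bound version. -/
private lemma lemA {R : ℝ} {h : ℂ → ℂ}
    (hd : DifferentiableOn ℂ h (ball 0 R)) (hb : ∀ w ∈ ball (0:ℂ) R, ‖h w‖ ≤ 1)
    {w : ℂ} (hw : w ∈ ball (0:ℂ) R) :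
    (1 - ‖w‖ / R) * ‖1 - h w‖ ≤ (1 + ‖w‖ / R) * ‖1 - h 0‖ := by
  have key : ∀ η : ℝ, η ∈ Set.Ioo (0:ℝ) 1 →
      (1 - ‖w‖ / R) * ‖1 - ((1 - η : ℝ) : ℂ) * h w‖
        ≤ (1 + ‖w‖ / R) * ‖1 - ((1 - η : ℝ) : ℂ) * h 0‖ := by
    intro η hη
    have hd' : DifferentiableOn ℂ (fun u => ((1 - η : ℝ) : ℂ) * h u) (ball 0 R) :=
      (differentiableOn_const _).mul hd
    have hb' : ∀ u ∈ ball (0:ℂ) R, ‖((1 - η : ℝ) : ℂ) * h u‖ < 1 := by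
      intro u hu
      rw [norm_mul, Complex.norm_real, Real.norm_eq_abs]
      have h1 : |1 - η| = 1 - η := abs_of_pos (by linarith [hη.2])
      rw [h1]
      nlinarith [hb u hu, norm_nonneg (h u), hη.1, hη.2]
    exact lemA_strict hd' hb' hw
  have hne : (𝓝[>] (0:ℝ)).NeBot := inferInstance
  have hcont : ∀ z : ℂ, Tendsto (fun η : ℝ => ‖1 - ((1 - η : ℝ) : ℂ) * z‖) (𝓝[>] (0:ℝ))
      (𝓝 ‖1 - z‖) := by
    intro z
    have hc : Continuous (fun η : ℝ => ‖1 - ((1 - η : ℝ) : ℂ) * z‖) := by fun_prop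
    have := (hc.tendsto 0).mono_left (nhdsWithin_le_nhds (s := Set.Ioi (0:ℝ)))
    simpa using this
  refine le_of_tendsto_of_tendsto (((hcont (h w)).const_mul (1 - ‖w‖ / R)))
    (((hcont (h 0)).const_mul (1 + ‖w‖ / R))) ?_
  filter_upwards [Ioo_mem_nhdsGT_of_mem (Set.mem_Ico.mpr ⟨le_refl (0:ℝ), zero_lt_one⟩)] with η hη
  exact key η hη

/-- Several-variable version on a ball, by slicing along a complex line. -/
private lemma lemB {n : ℕ} {R : ℝ} {g : (Fin n → ℂ) → ℂ} {a : Fin n → ℂ}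
    (hd : DifferentiableOn ℂ g (ball a R)) (hb : ∀ z ∈ ball a R, ‖g z‖ ≤ 1)
    {z : Fin n → ℂ} (hz : z ∈ ball a R) :
    (1 - dist z a / R) * ‖1 - g z‖ ≤ (1 + dist z a / R) * ‖1 - g a‖ := by
  have hR : 0 < R := nonempty_ball.mp ⟨_, hz⟩
  rcases eq_or_ne z a with rfl | hne
  · simp only [dist_self, zero_div, sub_zero, add_zero, one_mul]; exact le_refl _
  have hρ : 0 < dist z a := dist_pos.mpr hne
  set L : ℂ → (Fin n → ℂ) := fun w => a + w • (z - a) with hL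
  have hLd : Differentiable ℂ L := by
    apply Differentiable.const_add
    exact (differentiable_id.smul_const (z - a))
  have hLmaps : MapsTo L (ball (0:ℂ) (R / dist z a)) (ball a R) := by
    intro w hw
    rw [mem_ball, dist_zero_right] at hw
    rw [mem_ball, dist_eq_norm]
    have : ‖L w - a‖ = ‖w‖ * ‖z - a‖ := by rw [hL]; simp [norm_smul]
    rw [this, ← dist_eq_norm z a]
    calc ‖w‖ * dist z a < (R / dist z a) * dist z a := by
          exact mul_lt_mul_of_pos_right hw hρ
      _ = R := by field_simp
  have hh : DifferentiableOn ℂ (g ∘ L) (ball 0 (R / dist z a)) :=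
    hd.comp hLd.differentiableOn hLmaps
  have hhb : ∀ w ∈ ball (0:ℂ) (R / dist z a), ‖(g ∘ L) w‖ ≤ 1 :=
    fun w hw => hb _ (hLmaps hw)
  have h1mem : (1:ℂ) ∈ ball (0:ℂ) (R / dist z a) := by
    rw [mem_ball, dist_zero_right]
    simp only [norm_one]
    rw [lt_div_iff₀ hρ, one_mul]
    rwa [mem_ball] at hz
  have := lemA hh hhb h1mem
  have hL1 : L 1 = z := by rw [hL]; simp
  have hL0 : L 0 = a := by rw [hL]; simp
  have hk : ‖(1:ℂ)‖ / (R / dist z a) = dist z a / R := by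
    simp only [norm_one]; field_simp
  rw [hk] at this
  simpa [Function.comp, hL1, hL0] using this

private lemma prop_lemma {n : ℕ} {Ω : Set (Fin n → ℂ)} {g : ℕ → (Fin n → ℂ) → ℂ}
    (hdg : ∀ j, DifferentiableOn ℂ (g j) Ω) (hbg : ∀ j, ∀ z ∈ Ω, ‖g j z‖ ≤ 1)
    {z₀ : Fin n → ℂ} {R : ℝ} (hball : ball z₀ R ⊆ Ω)
    (h0 : Tendsto (fun j => g j z₀) atTop (𝓝 1))
    {z : Fin n → ℂ} (hz : z ∈ ball z₀ R) :
    Tendsto (fun j => g j z) atTop (𝓝 1) := by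
  have hR : 0 < R := nonempty_ball.mp ⟨_, hz⟩
  set k : ℝ := dist z z₀ / R with hk
  have hk1 : k < 1 := by
    rw [hk, div_lt_one hR]; exact mem_ball.mp hz
  have hk0 : 0 ≤ k := by positivity
  have hbd : ∀ j, ‖1 - g j z‖ ≤ (1 + k) / (1 - k) * ‖1 - g j z₀‖ := by
    intro j
    have h' : (1 - k) * ‖1 - g j z‖ ≤ (1 + k) * ‖1 - g j z₀‖ := by
      rw [hk]; exact lemB ((hdg j).mono hball) (fun u hu => hbg j u (hball hu)) hz
    rw [div_mul_eq_mul_div, le_div_iff₀ (by linarith : (0:ℝ) < 1 - k)]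
    nlinarith [norm_nonneg (1 - g j z), norm_nonneg (1 - g j z₀)]
  have h0' : Tendsto (fun j => ‖1 - g j z₀‖) atTop (𝓝 0) := by
    have := tendsto_iff_norm_sub_tendsto_zero.mp h0
    simpa [norm_sub_rev] using this
  have hsq : Tendsto (fun j => ‖1 - g j z‖) atTop (𝓝 0) := by
    refine squeeze_zero (fun j => norm_nonneg _) hbd ?_
    have := h0'.const_mul ((1 + k) / (1 - k))
    simpa using this
  rw [tendsto_iff_norm_sub_tendsto_zero]
  simpa [norm_sub_rev] using hsq

/-- Let `Ω ⊆ ℂⁿ` be a bounded domain, `X ∈ Ω`, and `φ_j ∈ Aut(Ω)` with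
`φ_j(X) → P ∈ ∂Ω`. If there is a holomorphic peak function at `P`, then `φ_j → P`
uniformly on every compact subset of `Ω` (in particular pointwise on `Ω`). -/
theorem orbit_tendsto_uniformly_to_peak_point {n : ℕ} (Ω : Set (Fin n → ℂ))
    (hopen : IsOpen Ω) (hconn : IsConnected Ω) (hbdd : Bornology.IsBounded Ω)
    (X : Fin n → ℂ) (hX : X ∈ Ω)
    (φ : ℕ → (Fin n → ℂ) → (Fin n → ℂ)) (hφ : ∀ j, IsAut Ω (φ j))
    (P : Fin n → ℂ) (hP : P ∈ frontier Ω)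
    (hlim : Tendsto (fun j => φ j X) atTop (nhds P))
    (f : (Fin n → ℂ) → ℂ) (U : Set (Fin n → ℂ)) (hU : IsOpen U)
    (hUΩ : closure Ω ⊆ U) (hf : DifferentiableOn ℂ f U)
    (hfP : f P = 1) (hfpeak : ∀ z ∈ closure Ω, z ≠ P → ‖f z‖ < 1) :
    ∀ K ⊆ Ω, IsCompact K →
      TendstoUniformlyOn (fun j => φ j) (fun _ => P) atTop K := by
  intro K hKΩ hK
  have hmaps : ∀ j, MapsTo (φ j) Ω Ω := fun j => (hφ j).2.1.mapsTo
  have hΩU : Ω ⊆ U := subset_closure.trans hUΩ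
  set g : ℕ → (Fin n → ℂ) → ℂ := fun j z => f (φ j z) with hg
  have hdg : ∀ j, DifferentiableOn ℂ (g j) Ω :=
    fun j => hf.comp (hφ j).1 (fun z hz => hΩU (hmaps j hz))
  have hbg : ∀ j, ∀ z ∈ Ω, ‖g j z‖ ≤ 1 := by
    intro j z hz
    have hm : φ j z ∈ closure Ω := subset_closure (hmaps j hz)
    rcases eq_or_ne (φ j z) P with he | he
    · rw [hg]; simp only [he, hfP, norm_one, le_refl]
    · exact (hfpeak _ hm he).le
  -- pointwise convergence of `g j z → 1` by a connectedness argument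
  have hpt : ∀ z ∈ Ω, Tendsto (fun j => g j z) atTop (𝓝 1) := by
    set S : Set (Fin n → ℂ) := {z | z ∈ Ω ∧ Tendsto (fun j => g j z) atTop (𝓝 1)} with hS
    set T : Set (Fin n → ℂ) := {z | z ∈ Ω ∧ ¬ Tendsto (fun j => g j z) atTop (𝓝 1)} with hT
    have hSopen : IsOpen S := by
      rw [Metric.isOpen_iff]
      intro z₀ hz₀
      obtain ⟨R, hR, hball⟩ := Metric.isOpen_iff.mp hopen z₀ hz₀.1
      exact ⟨R, hR, fun z hz => ⟨hball hz, prop_lemma hdg hbg hball hz₀.2 hz⟩⟩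
    have hTopen : IsOpen T := by
      rw [Metric.isOpen_iff]
      intro z₀ hz₀
      obtain ⟨R, hR, hball⟩ := Metric.isOpen_iff.mp hopen z₀ hz₀.1
      refine ⟨R / 2, by positivity, fun z hz => ⟨hball ?_, fun hten => hz₀.2 ?_⟩⟩
      · rw [mem_ball] at hz ⊢; linarith [mem_ball.mp hz]
      · have hsub : ball z (R / 2) ⊆ Ω := by
          intro w hw
          apply hball
          rw [mem_ball] at hw hz ⊢
          calc dist w z₀ ≤ dist w z + dist z z₀ := dist_triangle _ _ _
            _ < R := by linarith
        have hz₀mem : z₀ ∈ ball z (R / 2) := by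
          rw [mem_ball, dist_comm]; exact mem_ball.mp hz
        exact prop_lemma hdg hbg hsub hten hz₀mem
    have hXS : X ∈ S := by
      refine ⟨hX, ?_⟩
      have hfc : ContinuousAt f P :=
        hf.continuousOn.continuousAt (hU.mem_nhds (hUΩ (frontier_subset_closure hP)))
      have := hfc.tendsto.comp hlim
      rw [hfP] at this
      exact this
    intro z hz
    by_contra hc
    obtain ⟨w, hwΩ, hwS, hwT⟩ := hconn.isPreconnected S T hSopen hTopen
      (fun u hu => by by_cases h : Tendsto (fun j => g j u) atTop (𝓝 1)
                      exacts [Or.inl ⟨hu, h⟩, Or.inr ⟨hu, h⟩])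
      ⟨X, hX, hXS⟩ ⟨z, hz, ⟨hz, hc⟩⟩
    exact hwT.2 hwS.2
  -- the peak function separates `P` quantitatively
  rw [Metric.tendstoUniformlyOn_iff]
  intro ε hε
  have hCcl : IsCompact (closure Ω \ ball P ε) :=
    (Metric.isCompact_of_isClosed_isBounded isClosed_closure hbdd.closure).diff isOpen_ball
  have hδ : ∃ δ > 0, ∀ w ∈ closure Ω, 1 - δ < ‖f w‖ → dist P w < ε := by
    rcases (closure Ω \ ball P ε).eq_empty_or_nonempty with hCe | hCne
    · refine ⟨1, one_pos, fun w hw _ => ?_⟩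
      have : w ∈ ball P ε := by
        by_contra hcon
        exact absurd (hCe ▸ (⟨hw, hcon⟩ : w ∈ closure Ω \ ball P ε)) (Set.notMem_empty w)
      rw [dist_comm]; exact mem_ball.mp this
    · obtain ⟨w₀, hw₀C, hmax⟩ := hCcl.exists_isMaxOn hCne
        ((hf.continuousOn.mono (fun u hu => hUΩ hu.1 : closure Ω \ ball P ε ⊆ U)).norm)
      have hw₀P : w₀ ≠ P := fun h => hw₀C.2 (h ▸ mem_ball_self hε)
      have hlt : ‖f w₀‖ < 1 := hfpeak _ hw₀C.1 hw₀P
      refine ⟨1 - ‖f w₀‖, by linarith, fun w hw hfw => ?_⟩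
      by_contra hcon
      have hwC : w ∈ closure Ω \ ball P ε :=
        ⟨hw, fun hb => hcon (by rw [dist_comm]; exact mem_ball.mp hb)⟩
      have h2 : ‖f w‖ ≤ ‖f w₀‖ := hmax hwC
      linarith
  obtain ⟨δ, hδ0, hδ⟩ := hδ
  -- cover `K` by finitely many balls
  have hcov : ∀ z ∈ K, ∃ R, 0 < R ∧ ball z R ⊆ Ω := by
    intro z hz
    obtain ⟨R, hR, hball⟩ := Metric.isOpen_iff.mp hopen z (hKΩ hz)
    exact ⟨R, hR, hball⟩
  choose! Rz hRz hballz using hcov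
  obtain ⟨t, htK, htcov⟩ := hK.elim_nhds_subcover (fun z => ball z (Rz z / 2))
    (fun z hz => ball_mem_nhds z (by have := hRz z hz; positivity))
  have hev : ∀ᶠ j in atTop, ∀ z ∈ t, ‖1 - g j z‖ < δ / 3 := by
    rw [eventually_all_finset]
    intro z hzt
    have hzK : z ∈ K := htK z hzt
    have := tendsto_iff_norm_sub_tendsto_zero.mp (hpt z (hKΩ hzK))
    have h' : Tendsto (fun j => ‖1 - g j z‖) atTop (𝓝 0) := by
      simpa [norm_sub_rev] using this
    exact h'.eventually_lt_const (by positivity)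
  filter_upwards [hev] with j hj
  intro x hxK
  obtain ⟨z, hzt, hxz⟩ := Set.mem_iUnion₂.mp (htcov hxK)
  have hzK : z ∈ K := htK z hzt
  have hR0 : 0 < Rz z := hRz z hzK
  have hball : ball z (Rz z) ⊆ Ω := hballz z hzK
  have hxball : x ∈ ball z (Rz z) := by
    rw [mem_ball] at hxz ⊢; linarith [mem_ball.mp hxz]
  have hlemB := lemB ((hdg j).mono hball) (fun u hu => hbg j u (hball hu)) hxball
  have hkhalf : dist x z / Rz z < 1 / 2 := by
    rw [div_lt_div_iff₀ hR0 two_pos]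
    linarith [mem_ball.mp hxz]
  have hk0 : 0 ≤ dist x z / Rz z := by positivity
  have hgz : ‖1 - g j z‖ < δ / 3 := hj z hzt
  have hgx : ‖1 - g j x‖ < δ := by
    nlinarith [norm_nonneg (1 - g j x), norm_nonneg (1 - g j z)]
  have hnorm : 1 - δ < ‖g j x‖ := by
    have := norm_sub_norm_le (1 : ℂ) (g j x)
    rw [norm_one] at this
    linarith
  exact hδ (φ j x) (subset_closure (hmaps j (hKΩ hxK))) hnorm
end
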